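/- Let J be the matrix of multiplication by t in the basis of monic orthogonal polynomials {P_n} of dμ₀ = h dμ (a monic tridiagonal Jacobi matrix, acting on the column vector P = (P_0,P_1,…)^T via tP = JP). Let L be the lower triangular banded matrix with unit diagonal encoding P^* = L P, and U the upper triangular banded matrix encoding hP = U P^*. Then h(J) = U L and the band matrix J^* of multiplication by h in the basis {P_n^*} (hP^* = J^* P^*) satisfies J^* = L U. -/

import Mathlib

open Polynomial MeasureTheory

/-- Product of semi-infinite matrices (well-defined pointwise for banded matrices,
where each series has finite support). -/
noncomputable def matMul (A B : Matrix ℕ ℕ ℝ) : Matrix ℕ ℕ ℝ :=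
  Matrix.of fun i j => ∑' k, A i k * B k j

/-- Powers of a semi-infinite matrix. -/
noncomputable def matPow (A : Matrix ℕ ℕ ℝ) : ℕ → Matrix ℕ ℕ ℝ
  | 0 => 1
  | m + 1 => matMul (matPow A m) A

/-- Evaluation of a polynomial at a semi-infinite matrix: h(A) = Σ b_m A^m. -/
noncomputable def polyEvalMat (h : Polynomial ℝ) (A : Matrix ℕ ℕ ℝ) : Matrix ℕ ℕ ℝ :=
  Matrix.of fun i j => ∑ m ∈ Finset.range (h.natDegree + 1), h.coeff m * matPow A m i j

lemma matMul_apply (A B : Matrix ℕ ℕ ℝ) (i j : ℕ) :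
    matMul A B i j = ∑' k, A i k * B k j := rfl

lemma coeffs_zero (P : ℕ → Polynomial ℝ) (hm : ∀ n, (P n).Monic)
    (hd : ∀ n, (P n).natDegree = n) :
    ∀ M (c : ℕ → ℝ), (∑ k ∈ Finset.range M, C (c k) * P k) = 0 → ∀ k < M, c k = 0 := by
  intro M
  induction M with
  | zero => intro c _ k hk; omega
  | succ M ih =>
    intro c hc k hk
    have hPM : (P M).coeff M = 1 := by
      have := (hm M).coeff_natDegree
      rwa [hd M] at this
    have hcM : c M = 0 := by
      have h1 : (∑ k ∈ Finset.range (M+1), C (c k) * P k).coeff M = c M := by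
        rw [Polynomial.finset_sum_coeff]
        rw [Finset.sum_eq_single M]
        · simp [Polynomial.coeff_C_mul, hPM]
        · intro b hb hbM
          have hlt : (P b).natDegree < M := by
            rw [hd b]
            exact lt_of_le_of_ne (Nat.lt_succ_iff.mp (Finset.mem_range.mp hb)) hbM
          simp [Polynomial.coeff_C_mul, Polynomial.coeff_eq_zero_of_natDegree_lt hlt]
        · intro hM; exact absurd (Finset.self_mem_range_succ M) hM
      rw [hc] at h1
      simpa using h1.symm
    have hrest : (∑ k ∈ Finset.range M, C (c k) * P k) = 0 := by
      have h2 := hc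
      rw [Finset.sum_range_succ, hcM] at h2
      simpa using h2
    rcases Nat.lt_succ_iff_lt_or_eq.mp hk with hlt | heq
    · exact ih c hrest k hlt
    · rw [heq]; exact hcM

lemma coeffs_eq (P : ℕ → Polynomial ℝ) (hm : ∀ n, (P n).Monic)
    (hd : ∀ n, (P n).natDegree = n) (M : ℕ) (c d : ℕ → ℝ)
    (h : ∑ k ∈ Finset.range M, C (c k) * P k = ∑ k ∈ Finset.range M, C (d k) * P k) :
    ∀ k < M, c k = d k := by
  have h0 : ∑ k ∈ Finset.range M, C (c k - d k) * P k = 0 := by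
    have he : ∑ k ∈ Finset.range M, C (c k - d k) * P k
        = (∑ k ∈ Finset.range M, C (c k) * P k) - ∑ k ∈ Finset.range M, C (d k) * P k := by
      rw [← Finset.sum_sub_distrib]
      exact Finset.sum_congr rfl fun k _ => by rw [map_sub, sub_mul]
    rw [he, h, sub_self]
  intro k hk
  have := coeffs_zero P hm hd M (fun k => c k - d k) h0 k hk
  linarith

theorem darboux_factorization (N : ℕ) (hN : 1 ≤ N)
    (h : Polynomial ℝ) (hmonic : h.Monic) (hdeg : h.natDegree = N)
    (μ : Measure ℝ) (hint : ∀ f : Polynomial ℝ, Integrable (fun t => f.eval t) μ)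
    (P : ℕ → Polynomial ℝ)
    (hPmonic : ∀ n, (P n).Monic) (hPdeg : ∀ n, (P n).natDegree = n)
    (hPorth : ∀ n : ℕ, ∀ q : Polynomial ℝ, q.degree < n →
      ∫ t, (P n).eval t * q.eval t * h.eval t ∂μ = 0)
    (hPpos : ∀ n, 0 < ∫ t, (P n).eval t ^ 2 * h.eval t ∂μ)
    (Pstar : ℕ → Polynomial ℝ)
    (hQmonic : ∀ n, (Pstar n).Monic) (hQdeg : ∀ n, (Pstar n).natDegree = n)
    (J L U Jstar : Matrix ℕ ℕ ℝ)
    (hJ : ∀ n, X * P n = ∑ k ∈ Finset.range (n + 2), C (J n k) * P k)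
    (hJband : ∀ n k, n + 2 ≤ k → J n k = 0)
    (hL : ∀ n, Pstar n = ∑ k ∈ Finset.range (n + 1), C (L n k) * P k)
    (hLdiag : ∀ n, L n n = 1)
    (hLband : ∀ n k, (n < k ∨ k + N < n) → L n k = 0)
    (hU : ∀ n, h * P n = ∑ k ∈ Finset.range (n + N + 1), C (U n k) * Pstar k)
    (hUband : ∀ n k, (k < n ∨ n + N < k) → U n k = 0)
    (hJstar : ∀ n, h * Pstar n = ∑ k ∈ Finset.range (n + N + 1), C (Jstar n k) * Pstar k)
    (hJstarband : ∀ n k, n + N < k → Jstar n k = 0) :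
    ∀ n m : ℕ,
      polyEvalMat h J n m = matMul U L n m ∧ Jstar n m = matMul L U n m := by
  -- band structure of powers of J
  have hPowBand : ∀ m n k : ℕ, n + m + 1 ≤ k → matPow J m n k = 0 := by
    intro m
    induction m with
    | zero =>
      intro n k hk
      have hnk : n ≠ k := by omega
      simp [matPow, Matrix.one_apply, hnk]
    | succ m ih =>
      intro n k hk
      show matMul (matPow J m) J n k = 0
      rw [matMul_apply]
      have hz : ∀ l : ℕ, matPow J m n l * J l k = 0 := by
        intro l
        by_cases hl : n + m + 1 ≤ l
        · rw [ih n l hl, zero_mul]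
        · rw [hJband l k (by omega), mul_zero]
      simp [hz]
  have hPowSum : ∀ m n j : ℕ, matPow J (m+1) n j =
      ∑ k ∈ Finset.range (n + m + 1), matPow J m n k * J k j := by
    intro m n j
    show matMul (matPow J m) J n j = _
    rw [matMul_apply]
    apply tsum_eq_sum
    intro k hk
    rw [hPowBand m n k (by simp at hk; omega), zero_mul]
  -- action of powers of X on the basis
  have hXpow : ∀ m n : ℕ, X ^ m * P n =
      ∑ k ∈ Finset.range (n + m + 1), C (matPow J m n k) * P k := by
    intro m
    induction m with
    | zero =>
      intro n
      rw [pow_zero, one_mul]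
      have he : ∀ k, C (matPow J 0 n k) * P k = if n = k then P k else 0 := by
        intro k
        by_cases hnk : n = k <;> simp [matPow, Matrix.one_apply, hnk]
      rw [Finset.sum_congr rfl (fun k _ => he k), Finset.sum_ite_eq]
      simp
    | succ m ih =>
      intro n
      have e3 : n + (m+1) + 1 = n + m + 2 := by omega
      rw [e3]
      have e1 : X ^ (m+1) * P n = X * (X ^ m * P n) := by ring
      rw [e1, ih, Finset.mul_sum]
      have e2 : ∀ k ∈ Finset.range (n+m+1),
          X * (C (matPow J m n k) * P k)
            = ∑ j ∈ Finset.range (n+m+2), C (matPow J m n k) * (C (J k j) * P j) := by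
        intro k hk
        have hk' : k < n+m+1 := Finset.mem_range.mp hk
        rw [mul_left_comm, hJ k, Finset.mul_sum]
        apply Finset.sum_subset
        · intro j hj; simp at hj ⊢; omega
        · intro j _ hj2
          have hle : k + 2 ≤ j := by simp at hj2; omega
          simp [hJband k j hle]
      rw [Finset.sum_congr rfl e2, Finset.sum_comm]
      apply Finset.sum_congr rfl
      intro j _
      rw [hPowSum m n j, map_sum, Finset.sum_mul]
      exact Finset.sum_congr rfl fun k _ => by rw [map_mul, mul_assoc]
  have hEval : ∀ n k : ℕ, polyEvalMat h J n k =
      ∑ m ∈ Finset.range (N+1), h.coeff m * matPow J m n k := by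
    intro n k; simp [polyEvalMat, hdeg]
  have hEvalBand : ∀ n k : ℕ, n + N + 1 ≤ k → polyEvalMat h J n k = 0 := by
    intro n k hk
    rw [hEval]
    apply Finset.sum_eq_zero
    intro m hm
    rw [hPowBand m n k (by simp at hm; omega), mul_zero]
  -- expansion of h · P_n via h(J)
  have hHP : ∀ n : ℕ, h * P n =
      ∑ k ∈ Finset.range (n + N + 1), C (polyEvalMat h J n k) * P k := by
    intro n
    conv_lhs => rw [h.as_sum_range_C_mul_X_pow]
    rw [hdeg, Finset.sum_mul]
    have e1 : ∀ m ∈ Finset.range (N+1),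
        C (h.coeff m) * X ^ m * P n
          = ∑ k ∈ Finset.range (n+N+1), C (h.coeff m * matPow J m n k) * P k := by
      intro m hm
      rw [mul_assoc, hXpow m n, Finset.mul_sum]
      calc (∑ k ∈ Finset.range (n+m+1), C (h.coeff m) * (C (matPow J m n k) * P k))
          = ∑ k ∈ Finset.range (n+m+1), C (h.coeff m * matPow J m n k) * P k :=
            Finset.sum_congr rfl fun k _ => by rw [map_mul, mul_assoc]
        _ = ∑ k ∈ Finset.range (n+N+1), C (h.coeff m * matPow J m n k) * P k := by
            apply Finset.sum_subset
            · intro j hj; simp at hm hj ⊢; omega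
            · intro j _ hj2
              simp at hj2
              simp [hPowBand m n j (by omega)]
    rw [Finset.sum_congr rfl e1, Finset.sum_comm]
    apply Finset.sum_congr rfl
    intro k _
    rw [hEval n k, map_sum, Finset.sum_mul]
  -- expansion of h · P_n via U·L
  have hULsum : ∀ n j : ℕ, matMul U L n j = ∑ k ∈ Finset.range (n+N+1), U n k * L k j := by
    intro n j
    rw [matMul_apply]
    apply tsum_eq_sum
    intro k hk
    rw [hUband n k (Or.inr (by simp at hk; omega)), zero_mul]
  have hUL : ∀ n : ℕ, h * P n =
      ∑ j ∈ Finset.range (n + N + 1), C (matMul U L n j) * P j := by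
    intro n
    rw [hU n]
    have e1 : ∀ k ∈ Finset.range (n+N+1),
        C (U n k) * Pstar k
          = ∑ j ∈ Finset.range (n+N+1), C (U n k) * (C (L k j) * P j) := by
      intro k hk
      rw [hL k, Finset.mul_sum]
      apply Finset.sum_subset
      · intro j hj; simp at hk hj ⊢; omega
      · intro j _ hj2
        have hkj : k < j := by simp at hj2; omega
        simp [hLband k j (Or.inl hkj)]
    rw [Finset.sum_congr rfl e1, Finset.sum_comm]
    apply Finset.sum_congr rfl
    intro j _
    rw [hULsum n j, map_sum, Finset.sum_mul]
    exact Finset.sum_congr rfl fun k _ => by rw [map_mul, mul_assoc]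
  have part1 : ∀ n m : ℕ, polyEvalMat h J n m = matMul U L n m := by
    intro n m
    by_cases hm : m < n + N + 1
    · exact coeffs_eq P hPmonic hPdeg (n+N+1) _ _ ((hHP n).symm.trans (hUL n)) m hm
    · rw [hEvalBand n m (by omega), hULsum n m]
      symm
      apply Finset.sum_eq_zero
      intro k hk
      have hk' : k < n+N+1 := Finset.mem_range.mp hk
      rw [hLband k m (Or.inl (by omega)), mul_zero]
  -- second factorization
  have hLUsum : ∀ n j : ℕ, matMul L U n j = ∑ k ∈ Finset.range (n+1), L n k * U k j := by
    intro n j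
    rw [matMul_apply]
    apply tsum_eq_sum
    intro k hk
    rw [hLband n k (Or.inl (by simp at hk; omega)), zero_mul]
  have hLU : ∀ n : ℕ, h * Pstar n =
      ∑ j ∈ Finset.range (n + N + 1), C (matMul L U n j) * Pstar j := by
    intro n
    rw [hL n, Finset.mul_sum]
    have e1 : ∀ k ∈ Finset.range (n+1),
        h * (C (L n k) * P k)
          = ∑ j ∈ Finset.range (n+N+1), C (L n k) * (C (U k j) * Pstar j) := by
      intro k hk
      rw [mul_left_comm, hU k, Finset.mul_sum]
      apply Finset.sum_subset
      · intro j hj; simp at hk hj ⊢; omega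
      · intro j _ hj2
        have hk' : k < n + 1 := Finset.mem_range.mp hk
        have hkj : k + N < j := by simp at hj2; omega
        simp [hUband k j (Or.inr hkj)]
    rw [Finset.sum_congr rfl e1, Finset.sum_comm]
    apply Finset.sum_congr rfl
    intro j _
    rw [hLUsum n j, map_sum, Finset.sum_mul]
    exact Finset.sum_congr rfl fun k _ => by rw [map_mul, mul_assoc]
  have part2 : ∀ n m : ℕ, Jstar n m = matMul L U n m := by
    intro n m
    by_cases hm : m < n + N + 1
    · exact coeffs_eq Pstar hQmonic hQdeg (n+N+1) _ _ ((hJstar n).symm.trans (hLU n)) m hm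
    · rw [hJstarband n m (by omega), hLUsum n m]
      symm
      apply Finset.sum_eq_zero
      intro k hk
      have hkj : k + N < m := by simp at hk; omega
      rw [hUband k m (Or.inr hkj), mul_zero]
  intro n m
  exact ⟨part1 n m, part2 n m⟩
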